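/- Under the mixing assumption ‖dP(π) − d'P(π)‖_1 ≤ e^{−1/τ}·‖d − d'‖_1, for any fixed policy π with stationary distribution d_π, any initial distribution, and any sequence of loss vectors l_t ∈ [0,1]^n, the cumulative deviation satisfies Σ_{t=1}^T |⟨l_t, d_π − v_t^π⟩| ≤ 2τ + 2, where v_t^π is the state-action occupancy distribution at time t under π. -/

import Mathlib

open Real

/-- Under the mixing assumption, for a fixed policy with stationary distribution d_π, any
initial distribution and losses in [0,1], the cumulative deviation between the stationary
loss and the occupancy loss is at most 2τ + 2 (here `v 0` is the occupancy at time 1). -/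
theorem stmt_5 {n : ℕ} (τ : ℝ) (hτ : 0 < τ)
    (F : (Fin n → ℝ) → (Fin n → ℝ))
    (hFdist : ∀ d : Fin n → ℝ, (∀ i, 0 ≤ d i) → (∑ i, d i) = 1 →
        (∀ i, 0 ≤ F d i) ∧ (∑ i, F d i) = 1)
    (hFcontr : ∀ d d' : Fin n → ℝ, (∀ i, 0 ≤ d i) → (∑ i, d i) = 1 →
        (∀ i, 0 ≤ d' i) → (∑ i, d' i) = 1 →
        ∑ i, |F d i - F d' i| ≤ Real.exp (-1 / τ) * ∑ i, |d i - d' i|)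
    (dπ : Fin n → ℝ) (hdπ0 : ∀ i, 0 ≤ dπ i) (hdπ1 : ∑ i, dπ i = 1)
    (hstat : F dπ = dπ)
    (v : ℕ → Fin n → ℝ) (hv0 : ∀ i, 0 ≤ v 0 i) (hv0' : ∑ i, v 0 i = 1)
    (hrec : ∀ t, v (t + 1) = F (v t))
    (l : ℕ → Fin n → ℝ) (hl : ∀ t i, l t i ∈ Set.Icc (0 : ℝ) 1)
    (T : ℕ) :
    ∑ t ∈ Finset.range T, |∑ i, l t i * (dπ i - v t i)| ≤ 2 * τ + 2 := by
  set r := Real.exp (-1 / τ) with hrdef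
  have hr0 : 0 < r := Real.exp_pos _
  have hr1 : r < 1 := by
    rw [hrdef]
    exact Real.exp_lt_one_iff.mpr (div_neg_of_neg_of_pos (by norm_num) hτ)
  have hv : ∀ t, (∀ i, 0 ≤ v t i) ∧ ∑ i, v t i = 1 := by
    intro t
    induction t with
    | zero => exact ⟨hv0, hv0'⟩
    | succ t ih => rw [hrec]; exact hFdist _ ih.1 ih.2
  have hnorm : ∀ t, ∑ i, |dπ i - v t i| ≤ 2 * r ^ t := by
    intro t
    induction t with
    | zero =>
      simp only [pow_zero, mul_one]
      calc ∑ i, |dπ i - v 0 i| ≤ ∑ i, (dπ i + v 0 i) := by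
            apply Finset.sum_le_sum
            intro i _
            have := abs_sub (dπ i) (v 0 i)
            rw [abs_of_nonneg (hdπ0 i), abs_of_nonneg (hv0 i)] at this
            exact this
        _ = 2 := by rw [Finset.sum_add_distrib, hdπ1, hv0']; norm_num
    | succ t ih =>
      calc ∑ i, |dπ i - v (t + 1) i| = ∑ i, |F dπ i - F (v t) i| := by
            rw [hstat, hrec]
        _ ≤ r * ∑ i, |dπ i - v t i| :=
            hFcontr dπ (v t) hdπ0 hdπ1 (hv t).1 (hv t).2
        _ ≤ r * (2 * r ^ t) := by
            apply mul_le_mul_of_nonneg_left ih hr0.le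
        _ = 2 * r ^ (t + 1) := by ring
  have hterm : ∀ t, |∑ i, l t i * (dπ i - v t i)| ≤ 2 * r ^ t := by
    intro t
    calc |∑ i, l t i * (dπ i - v t i)| ≤ ∑ i, |l t i * (dπ i - v t i)| :=
          Finset.abs_sum_le_sum_abs _ _
      _ ≤ ∑ i, |dπ i - v t i| := by
          apply Finset.sum_le_sum
          intro i _
          rw [abs_mul]
          have h := hl t i
          have habs : |l t i| ≤ 1 := abs_le.mpr ⟨by linarith [h.1], h.2⟩
          nlinarith [abs_nonneg (dπ i - v t i)]
      _ ≤ 2 * r ^ t := hnorm t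
  have hrτ : r * (1 + τ) ≤ τ := by
    have hrexp : r * Real.exp (1 / τ) = 1 := by
      rw [hrdef, ← Real.exp_add]
      have : -1 / τ + 1 / τ = 0 := by ring
      rw [this, Real.exp_zero]
    have hexp : 1 / τ + 1 ≤ Real.exp (1 / τ) := Real.add_one_le_exp _
    have h1 : r * (1 / τ + 1) ≤ 1 := by nlinarith
    have h2 : r * (1 / τ + 1) * τ ≤ τ := by nlinarith
    calc r * (1 + τ) = r * (1 / τ + 1) * τ := by field_simp
      _ ≤ τ := h2
  have hgeo : ∑ t ∈ Finset.range T, r ^ t ≤ 1 + τ := by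
    have heq := geom_sum_eq hr1.ne T
    rw [heq]
    rw [div_le_iff_of_neg (by linarith : r - 1 < 0)]
    have hpow : 0 ≤ r ^ T := pow_nonneg hr0.le T
    nlinarith
  calc ∑ t ∈ Finset.range T, |∑ i, l t i * (dπ i - v t i)|
      ≤ ∑ t ∈ Finset.range T, 2 * r ^ t :=
        Finset.sum_le_sum fun t _ => hterm t
    _ = 2 * ∑ t ∈ Finset.range T, r ^ t := by rw [Finset.mul_sum]
    _ ≤ 2 * (1 + τ) := by linarith [hgeo]
    _ = 2 * τ + 2 := by ring
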